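/- (Wall-crossing formula, symmetric case.) Let e = (0,…,0,1) ∈ ℕ^{n+1}, x_* = x^e, and ν = ⟨−, e⟩ : ℤ^{n+1} → ℤ. Assume ⟨α,β⟩ = 0 whenever the last coordinates of α and β are both zero (so the unframed elements form a commutative subalgebra T̂⁰ of T̂). Suppose A, A⁻, A⁺, B ∈ T̂ are unframed, B(0) is a unit of R (so B is invertible in T̂⁰), and M_e(A) = B ∘ M_e(A⁻) and M_e(A) = M_e(A⁺) ∘ B. Then A⁺ = C ∘ A⁻, where C = S_ν(B) ∘ (S_{−ν}(B))^{−1}; moreover C = S_{−ν}(S_{2ν}(B) ∘ B^{−1}). -/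

import Mathlib

open Finset

/-- Coercion of an exponent vector `ℕ^k → ℤ^k`. -/
def coeZ {k : ℕ} (α : Fin k → ℕ) : Fin k → ℤ := fun i => (α i : ℤ)

/-- Multiplication of the completed quantum torus `T̂`: for functions
`f g : ℕ^k → R`, `(f ∘ g)(γ) = Σ_{α+β=γ} u^{⟨α,β⟩} f(α) g(β)`. -/
noncomputable def qmul {R : Type*} [CommRing R] {k : ℕ}
    (B : (Fin k → ℤ) →+ (Fin k → ℤ) →+ ℤ) (u : Rˣ)
    (f g : (Fin k → ℕ) → R) : (Fin k → ℕ) → R :=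
  fun γ => ∑ α ∈ Finset.Iic γ,
    ((u ^ (B (coeZ α) (coeZ (γ - α))) : Rˣ) : R) * f α * g (γ - α)

/-- The basis element `x^α ∈ T̂`: the indicator function of `α`. -/
def xpow {R : Type*} [CommRing R] {k : ℕ} (α : Fin k → ℕ) : (Fin k → ℕ) → R :=
  fun γ => if γ = α then 1 else 0

/-- The twist operator `S_λ : T̂ → T̂`, `(S_λ f)(α) = u^{λ(α)}·f(α)`. -/
def Sop {R : Type*} [CommRing R] {k : ℕ} (u : Rˣ) (lam : (Fin k → ℤ) →+ ℤ)
    (f : (Fin k → ℕ) → R) : (Fin k → ℕ) → R :=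
  fun α => ((u ^ (lam (coeZ α)) : Rˣ) : R) * f α

/-- The shift operator `M_β : T̂ → T̂` (untwisted multiplication by `x^β`). -/
noncomputable def Mshift {R : Type*} [CommRing R] {k : ℕ} (β : Fin k → ℕ)
    (f : (Fin k → ℕ) → R) : (Fin k → ℕ) → R :=
  fun γ => open Classical in if β ≤ γ then f (γ - β) else 0

/-- The framing basis vector `e = (0,…,0,1) ∈ ℕ^{n+1}`. -/
def lastE (n : ℕ) : Fin (n + 1) → ℕ := fun i => if i = Fin.last n then 1 else 0

/-- An element of the completed quantum torus is unframed if it is supported on exponents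
whose last coordinate vanishes. -/
def Unframed {R : Type*} [CommRing R] {n : ℕ} (f : (Fin (n + 1) → ℕ) → R) : Prop :=
  ∀ α : Fin (n + 1) → ℕ, α (Fin.last n) ≠ 0 → f α = 0

section aux
variable {R : Type*} [CommRing R] {k : ℕ}

lemma coeZ_zero : coeZ (0 : Fin k → ℕ) = 0 := by
  funext i; simp [coeZ]

lemma add_coeZ_sub {α γ : Fin k → ℕ} (h : α ≤ γ) :
    coeZ α + coeZ (γ - α) = coeZ γ := by
  funext i
  have h2 : α i ≤ γ i := h i
  simp only [coeZ, Pi.add_apply, Pi.sub_apply]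
  omega

lemma unit_cancel (c : Rˣ) {a b : R} (h : (c : R) * a = (c : R) * b) : a = b := by
  simpa [← mul_assoc] using congrArg (fun r => ((c⁻¹ : Rˣ) : R) * r) h

variable (B : (Fin k → ℤ) →+ (Fin k → ℤ) →+ ℤ) (u : Rˣ)

lemma qmul_xpow_right_pos (f : (Fin k → ℕ) → R) {η γ : Fin k → ℕ} (h : η ≤ γ) :
    qmul B u f (xpow η) γ = ((u ^ (B (coeZ (γ - η)) (coeZ η)) : Rˣ) : R) * f (γ - η) := by
  simp only [qmul, xpow]
  rw [Finset.sum_eq_single (γ - η)]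
  · rw [tsub_tsub_cancel_of_le h, if_pos rfl]; ring
  · intro α hα hne
    rw [if_neg, mul_zero]
    intro hc
    apply hne
    have hle := Finset.mem_Iic.mp hα
    have : γ = η + α := by rw [← hc, tsub_add_cancel_of_le hle]
    rw [this, add_tsub_cancel_left]
  · intro hc
    exact absurd (Finset.mem_Iic.mpr tsub_le_self) hc

lemma qmul_xpow_right_neg (f : (Fin k → ℕ) → R) {η γ : Fin k → ℕ} (h : ¬ η ≤ γ) :
    qmul B u f (xpow η) γ = 0 := by
  simp only [qmul, xpow]
  apply Finset.sum_eq_zero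
  intro α hα
  rw [if_neg, mul_zero]
  intro hc
  exact h (hc ▸ tsub_le_self)

lemma qmul_xpow_left_pos (f : (Fin k → ℕ) → R) {η γ : Fin k → ℕ} (h : η ≤ γ) :
    qmul B u (xpow η) f γ = ((u ^ (B (coeZ η) (coeZ (γ - η))) : Rˣ) : R) * f (γ - η) := by
  simp only [qmul, xpow]
  rw [Finset.sum_eq_single η]
  · rw [if_pos rfl, mul_one]
  · intro α hα hne
    rw [if_neg hne, mul_zero, zero_mul]
  · intro hc
    exact absurd (Finset.mem_Iic.mpr h) hc

lemma qmul_xpow_left_neg (f : (Fin k → ℕ) → R) {η γ : Fin k → ℕ} (h : ¬ η ≤ γ) :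
    qmul B u (xpow η) f γ = 0 := by
  simp only [qmul, xpow]
  apply Finset.sum_eq_zero
  intro α hα
  rw [if_neg, mul_zero, zero_mul]
  intro hc
  exact h (hc ▸ Finset.mem_Iic.mp hα)

lemma qmul_one (f : (Fin k → ℕ) → R) : qmul B u f (xpow 0) = f := by
  funext γ
  rw [qmul_xpow_right_pos B u f (zero_le : 0 ≤ γ)]
  simp [coeZ_zero, tsub_zero]

lemma one_qmul (f : (Fin k → ℕ) → R) : qmul B u (xpow 0) f = f := by
  funext γ
  rw [qmul_xpow_left_pos B u f (zero_le : 0 ≤ γ)]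
  simp [coeZ_zero, tsub_zero]

end aux

section aux2
variable {R : Type*} [CommRing R] {k : ℕ}
variable (B : (Fin k → ℤ) →+ (Fin k → ℤ) →+ ℤ) (u : Rˣ)

lemma qmul_assoc (f g h : (Fin k → ℕ) → R) :
    qmul B u (qmul B u f g) h = qmul B u f (qmul B u g h) := by
  funext γ
  simp only [qmul]
  have L : ∑ β ∈ Iic γ, ((u ^ ((B (coeZ β)) (coeZ (γ - β))) : Rˣ) : R) *
        (∑ α ∈ Iic β, ((u ^ ((B (coeZ α)) (coeZ (β - α))) : Rˣ) : R) * f α * g (β - α)) *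
        h (γ - β)
      = ∑ p ∈ (Iic γ).sigma (fun β => Iic β),
        ((u ^ ((B (coeZ p.1)) (coeZ (γ - p.1))) : Rˣ) : R) *
          (((u ^ ((B (coeZ p.2)) (coeZ (p.1 - p.2))) : Rˣ) : R) * f p.2 * g (p.1 - p.2)) *
          h (γ - p.1) := by
    rw [Finset.sum_sigma]
    apply Finset.sum_congr rfl
    intro β hβ
    simp only [Finset.mul_sum, Finset.sum_mul]
  have Rr : ∑ α ∈ Iic γ, ((u ^ ((B (coeZ α)) (coeZ (γ - α))) : Rˣ) : R) * f α *
        (∑ δ ∈ Iic (γ - α), ((u ^ ((B (coeZ δ)) (coeZ (γ - α - δ))) : Rˣ) : R) * g δ *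
          h (γ - α - δ))
      = ∑ p ∈ (Iic γ).sigma (fun α => Iic (γ - α)),
        ((u ^ ((B (coeZ p.1)) (coeZ (γ - p.1))) : Rˣ) : R) * f p.1 *
          (((u ^ ((B (coeZ p.2)) (coeZ (γ - p.1 - p.2))) : Rˣ) : R) * g p.2 *
            h (γ - p.1 - p.2)) := by
    rw [Finset.sum_sigma]
    apply Finset.sum_congr rfl
    intro α hα
    simp only [Finset.mul_sum]
  rw [L, Rr]
  apply Finset.sum_nbij' (i := fun p => ⟨p.2, p.1 - p.2⟩)
    (j := fun (p : (_ : Fin k → ℕ) × (Fin k → ℕ)) => ⟨p.1 + p.2, p.1⟩)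
  · rintro ⟨β, α⟩ hp
    simp only [Finset.mem_sigma, Finset.mem_Iic] at hp ⊢
    exact ⟨hp.2.trans hp.1, tsub_le_tsub hp.1 le_rfl⟩
  · rintro ⟨α, δ⟩ hp
    simp only [Finset.mem_sigma, Finset.mem_Iic] at hp ⊢
    constructor
    · have := hp.2
      have h2 : α + δ ≤ α + (γ - α) := add_le_add le_rfl hp.2
      rwa [add_tsub_cancel_of_le hp.1] at h2
    · exact le_add_right le_rfl
  · rintro ⟨β, α⟩ hp
    simp only [Finset.mem_sigma, Finset.mem_Iic] at hp
    simp [add_tsub_cancel_of_le hp.2]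
  · rintro ⟨α, δ⟩ hp
    simp only [Finset.mem_sigma, Finset.mem_Iic] at hp
    simp
  · rintro ⟨β, α⟩ hp
    simp only [Finset.mem_sigma, Finset.mem_Iic] at hp
    obtain ⟨hβγ, hαβ⟩ := hp
    have e1 : γ - α - (β - α) = γ - β := by
      rw [tsub_tsub, add_tsub_cancel_of_le hαβ]
    have e2 : coeZ β = coeZ α + coeZ (β - α) := (add_coeZ_sub hαβ).symm
    have e3 : coeZ (γ - α) = coeZ (β - α) + coeZ (γ - β) := by
      have hαγ : α ≤ γ := hαβ.trans hβγ
      have : β - α ≤ γ - α := tsub_le_tsub hβγ le_rfl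
      rw [← add_coeZ_sub this, e1]
    have hexp : (B (coeZ β)) (coeZ (γ - β)) + (B (coeZ α)) (coeZ (β - α))
        = (B (coeZ α)) (coeZ (γ - α)) + (B (coeZ (β - α))) (coeZ (γ - β)) := by
      rw [e2, e3]
      simp only [map_add, AddMonoidHom.add_apply]
      ring
    have hu : ((u ^ ((B (coeZ β)) (coeZ (γ - β))) : Rˣ) : R) *
        ((u ^ ((B (coeZ α)) (coeZ (β - α))) : Rˣ) : R)
        = ((u ^ ((B (coeZ α)) (coeZ (γ - α))) : Rˣ) : R) *
          ((u ^ ((B (coeZ (β - α))) (coeZ (γ - β))) : Rˣ) : R) := by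
      rw [← Units.val_mul, ← Units.val_mul, ← zpow_add, ← zpow_add, hexp]
    simp only [e1]
    calc ((u ^ ((B (coeZ β)) (coeZ (γ - β))) : Rˣ) : R) *
          (((u ^ ((B (coeZ α)) (coeZ (β - α))) : Rˣ) : R) * f α * g (β - α)) * h (γ - β)
        = (((u ^ ((B (coeZ β)) (coeZ (γ - β))) : Rˣ) : R) *
            ((u ^ ((B (coeZ α)) (coeZ (β - α))) : Rˣ) : R)) * (f α * g (β - α) * h (γ - β)) := by
          ring
      _ = (((u ^ ((B (coeZ α)) (coeZ (γ - α))) : Rˣ) : R) *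
            ((u ^ ((B (coeZ (β - α))) (coeZ (γ - β))) : Rˣ) : R)) *
            (f α * g (β - α) * h (γ - β)) := by rw [hu]
      _ = ((u ^ ((B (coeZ α)) (coeZ (γ - α))) : Rˣ) : R) * f α *
            (((u ^ ((B (coeZ (β - α))) (coeZ (γ - β))) : Rˣ) : R) * g (β - α) * h (γ - β)) := by
          ring

end aux2

section aux3
variable {R : Type*} [CommRing R] {k : ℕ}
variable (B : (Fin k → ℤ) →+ (Fin k → ℤ) →+ ℤ) (u : Rˣ)

lemma Sop_qmul (lam : (Fin k → ℤ) →+ ℤ) (f g : (Fin k → ℕ) → R) :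
    Sop u lam (qmul B u f g) = qmul B u (Sop u lam f) (Sop u lam g) := by
  funext γ
  simp only [Sop, qmul, Finset.mul_sum]
  apply Finset.sum_congr rfl
  intro α hα
  have hl : lam (coeZ γ) = lam (coeZ α) + lam (coeZ (γ - α)) := by
    rw [← add_coeZ_sub (Finset.mem_Iic.mp hα), map_add]
  rw [hl, zpow_add]
  push_cast
  ring

lemma Sop_Sop (l1 l2 : (Fin k → ℤ) →+ ℤ) (f : (Fin k → ℕ) → R) :
    Sop u l1 (Sop u l2 f) = Sop u (l1 + l2) f := by
  funext α
  simp only [Sop, AddMonoidHom.add_apply, zpow_add]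
  push_cast
  ring

lemma Sop_zero (f : (Fin k → ℕ) → R) : Sop u (0 : (Fin k → ℤ) →+ ℤ) f = f := by
  funext α; simp [Sop]

lemma Sop_xpow_zero (lam : (Fin k → ℤ) →+ ℤ) :
    Sop u lam (xpow (0 : Fin k → ℕ)) = (xpow 0 : (Fin k → ℕ) → R) := by
  funext γ
  simp only [Sop, xpow]
  by_cases h : γ = 0
  · simp [h, coeZ_zero]
  · simp [h]

lemma qmul_cancel_right {f g : (Fin k → ℕ) → R} (η : Fin k → ℕ)
    (h : qmul B u f (xpow η) = qmul B u g (xpow η)) : f = g := by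
  funext β
  have hβ := congrFun h (β + η)
  rw [qmul_xpow_right_pos B u f le_add_self, qmul_xpow_right_pos B u g le_add_self,
    add_tsub_cancel_right] at hβ
  exact unit_cancel _ hβ

lemma qmul_cancel_left {f g : (Fin k → ℕ) → R} (η : Fin k → ℕ)
    (h : qmul B u (xpow η) f = qmul B u (xpow η) g) : f = g := by
  funext β
  have hβ := congrFun h (β + η)
  rw [qmul_xpow_left_pos B u f le_add_self, qmul_xpow_left_pos B u g le_add_self,
    add_tsub_cancel_right] at hβ
  exact unit_cancel _ hβ

end aux3

section aux4
variable {R : Type*} [CommRing R] {n : ℕ}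
variable (B : (Fin (n + 1) → ℤ) →+ (Fin (n + 1) → ℤ) →+ ℤ) (u : Rˣ)

lemma unframed_coeZ {α : Fin (n + 1) → ℕ} (h : α (Fin.last n) = 0) :
    coeZ α (Fin.last n) = 0 := by simp [coeZ, h]

lemma unframed_Sop (lam : (Fin (n + 1) → ℤ) →+ ℤ) {f : (Fin (n + 1) → ℕ) → R}
    (hf : Unframed f) : Unframed (Sop u lam f) := by
  intro α hα
  simp [Sop, hf α hα]

lemma unframed_sub {α γ : Fin (n + 1) → ℕ} (hα : α ≤ γ) (hγ : γ (Fin.last n) ≠ 0)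
    (h : α (Fin.last n) = 0) : (γ - α) (Fin.last n) ≠ 0 := by
  have := hα (Fin.last n)
  simp only [Pi.sub_apply]
  omega

lemma unframed_qmul {f g : (Fin (n + 1) → ℕ) → R} (hf : Unframed f) (hg : Unframed g) :
    Unframed (qmul B u f g) := by
  intro γ hγ
  apply Finset.sum_eq_zero
  intro α hα
  by_cases h : α (Fin.last n) = 0
  · rw [hg _ (unframed_sub (Finset.mem_Iic.mp hα) hγ h), mul_zero]
  · rw [hf _ h, mul_zero, zero_mul]

variable (hsym : ∀ a b : Fin (n + 1) → ℤ,
      a (Fin.last n) = 0 → b (Fin.last n) = 0 → B a b = 0)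

include hsym in
lemma qmul_unframed_apply {f g : (Fin (n + 1) → ℕ) → R} (hf : Unframed f) (hg : Unframed g)
    (γ : Fin (n + 1) → ℕ) :
    qmul B u f g γ = ∑ α ∈ Finset.Iic γ, f α * g (γ - α) := by
  apply Finset.sum_congr rfl
  intro α hα
  by_cases h1 : f α = 0
  · simp [h1]
  by_cases h2 : g (γ - α) = 0
  · simp [h2]
  have hα0 : α (Fin.last n) = 0 := by by_contra hc; exact h1 (hf _ hc)
  have hγα0 : (γ - α) (Fin.last n) = 0 := by by_contra hc; exact h2 (hg _ hc)
  rw [hsym _ _ (unframed_coeZ hα0) (unframed_coeZ hγα0)]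
  simp

include hsym in
lemma qmul_comm_unframed {f g : (Fin (n + 1) → ℕ) → R} (hf : Unframed f) (hg : Unframed g) :
    qmul B u f g = qmul B u g f := by
  funext γ
  rw [qmul_unframed_apply B u hsym hf hg, qmul_unframed_apply B u hsym hg hf]
  apply Finset.sum_nbij' (i := fun α => γ - α) (j := fun α => γ - α)
  · intro α hα; exact Finset.mem_Iic.mpr tsub_le_self
  · intro α hα; exact Finset.mem_Iic.mpr tsub_le_self
  · intro α hα; exact tsub_tsub_cancel_of_le (Finset.mem_Iic.mp hα)
  · intro α hα; exact tsub_tsub_cancel_of_le (Finset.mem_Iic.mp hα)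
  · intro α hα
    rw [tsub_tsub_cancel_of_le (Finset.mem_Iic.mp hα), mul_comm]

end aux4

noncomputable def qinv {R : Type*} [CommRing R] {k : ℕ}
    (Bs : (Fin k → ℕ) → R) (b : Rˣ) (γ : Fin k → ℕ) : R :=
  if h : γ = 0 then ((b⁻¹ : Rˣ) : R)
  else -((b⁻¹ : Rˣ) : R) * ∑ α ∈ ((Finset.Iic γ).erase 0).attach,
      Bs α.1 * qinv Bs b (γ - α.1)
termination_by ∑ i, γ i
decreasing_by
  have hα := α.2
  simp only [Finset.mem_erase, Finset.mem_Iic] at hα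
  obtain ⟨hne, hle⟩ := hα
  obtain ⟨i, hi⟩ : ∃ i, α.1 i ≠ 0 := by
    by_contra hcon; push_neg at hcon; exact hne (funext fun i => hcon i)
  refine Finset.sum_lt_sum (fun j _ => ?_) ⟨i, Finset.mem_univ i, ?_⟩
  · show γ j - α.1 j ≤ γ j
    omega
  · have h1 : α.1 i ≤ γ i := hle i
    have h2 : α.1 i ≠ 0 := hi
    show γ i - α.1 i < γ i
    omega

section aux5
variable {R : Type*} [CommRing R] {n : ℕ}
variable (B : (Fin (n + 1) → ℤ) →+ (Fin (n + 1) → ℤ) →+ ℤ) (u : Rˣ)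
variable {Bs : (Fin (n + 1) → ℕ) → R} {b : Rˣ}

lemma qinv_unframed (hBs : Unframed Bs) : Unframed (qinv Bs b) := by
  have key : ∀ N (γ : Fin (n + 1) → ℕ), ∑ i, γ i ≤ N → γ (Fin.last n) ≠ 0 →
      qinv Bs b γ = 0 := by
    intro N
    induction N with
    | zero =>
      intro γ h hγ
      exfalso
      apply hγ
      have := Finset.sum_eq_zero_iff.mp (Nat.le_zero.mp h)
      exact this (Fin.last n) (Finset.mem_univ _)
    | succ N ih =>
      intro γ h hγ
      have hγ0 : γ ≠ 0 := by
        intro hc; apply hγ; rw [hc]; rfl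
      rw [qinv, dif_neg hγ0]
      rw [Finset.sum_eq_zero, mul_zero]
      rintro ⟨α, hα⟩ -
      simp only [Finset.mem_erase, Finset.mem_Iic] at hα
      obtain ⟨hne, hle⟩ := hα
      by_cases hlast : α (Fin.last n) = 0
      · obtain ⟨i, hi⟩ : ∃ i, α i ≠ 0 := by
          by_contra hcon; push_neg at hcon; exact hne (funext fun i => hcon i)
        have hlt : ∑ i, (γ - α) i < ∑ i, γ i := by
          refine Finset.sum_lt_sum (fun j _ => ?_) ⟨i, Finset.mem_univ i, ?_⟩
          · show γ j - α j ≤ γ j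
            omega
          · have h1 : α i ≤ γ i := hle i
            have h2 : α i ≠ 0 := hi
            show γ i - α i < γ i
            omega
        rw [ih (γ - α) (Nat.lt_succ_iff.mp (lt_of_lt_of_le hlt h)) (unframed_sub hle hγ hlast),
          mul_zero]
      · rw [hBs _ hlast, zero_mul]
  intro γ hγ
  exact key (∑ i, γ i) γ le_rfl hγ

variable (hsym : ∀ a b : Fin (n + 1) → ℤ,
      a (Fin.last n) = 0 → b (Fin.last n) = 0 → B a b = 0)

include hsym in
lemma qmul_qinv (hBs : Unframed Bs) (hb : Bs 0 = (b : R)) :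
    qmul B u Bs (qinv Bs b) = xpow 0 := by
  funext γ
  rw [qmul_unframed_apply B u hsym hBs (qinv_unframed hBs)]
  have h0 : (0 : Fin (n + 1) → ℕ) ∈ Finset.Iic γ := Finset.mem_Iic.mpr (zero_le : 0 ≤ γ)
  rw [← Finset.add_sum_erase _ _ h0, tsub_zero]
  by_cases hγ : γ = 0
  · subst hγ
    have : (Finset.Iic (0 : Fin (n + 1) → ℕ)).erase 0 = ∅ := by
      ext α
      simp only [Finset.mem_erase, Finset.mem_Iic, Finset.notMem_empty, iff_false, not_and]
      intro hne hle
      exact hne (le_antisymm hle (zero_le : 0 ≤ α))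
    rw [this, Finset.sum_empty, add_zero, qinv, dif_pos rfl, hb, xpow]
    simp
  · rw [show qinv Bs b γ = -((b⁻¹ : Rˣ) : R) * ∑ α ∈ ((Finset.Iic γ).erase 0).attach,
        Bs α.1 * qinv Bs b (γ - α.1) from by rw [qinv, dif_neg hγ],
      Finset.sum_attach _ (fun α => Bs α * qinv Bs b (γ - α)), hb, xpow, if_neg hγ]
    rw [neg_mul, mul_neg, ← mul_assoc, Units.mul_inv, one_mul, neg_add_cancel]

include hsym in
lemma qinv_qmul (hBs : Unframed Bs) (hb : Bs 0 = (b : R)) :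
    qmul B u (qinv Bs b) Bs = xpow 0 := by
  rw [qmul_comm_unframed B u hsym (qinv_unframed hBs) hBs, qmul_qinv B u hsym hBs hb]

end aux5

section aux6
variable {R : Type*} [CommRing R] {k : ℕ}
variable (B : (Fin k → ℤ) →+ (Fin k → ℤ) →+ ℤ) (u : Rˣ)

lemma Mshift_eq_right (η : Fin k → ℕ) (g : (Fin k → ℕ) → R) :
    Mshift η g = qmul B u (Sop u (-(B.flip (coeZ η))) g) (xpow η) := by
  funext γ
  by_cases h : η ≤ γ
  · rw [qmul_xpow_right_pos B u _ h]
    simp only [Mshift, if_pos h, Sop, AddMonoidHom.neg_apply, AddMonoidHom.flip_apply]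
    rw [← mul_assoc, ← Units.val_mul, ← zpow_add, add_neg_cancel, zpow_zero, Units.val_one,
      one_mul]
  · rw [qmul_xpow_right_neg B u _ h]
    simp only [Mshift, if_neg h]

lemma Mshift_eq_left (hskew : ∀ a b : Fin k → ℤ, B a b = - B b a)
    (η : Fin k → ℕ) (g : (Fin k → ℕ) → R) :
    Mshift η g = qmul B u (xpow η) (Sop u (B.flip (coeZ η)) g) := by
  funext γ
  by_cases h : η ≤ γ
  · rw [qmul_xpow_left_pos B u _ h]
    simp only [Mshift, if_pos h, Sop, AddMonoidHom.flip_apply]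
    rw [hskew (coeZ η) (coeZ (γ - η)), ← mul_assoc, ← Units.val_mul, ← zpow_add,
      neg_add_cancel, zpow_zero, Units.val_one, one_mul]
  · rw [qmul_xpow_left_neg B u _ h]
    simp only [Mshift, if_neg h]

lemma qmul_inv_unique {X Y Y' : (Fin k → ℕ) → R}
    (h1 : qmul B u X Y = xpow 0) (h2 : qmul B u Y' X = xpow 0) : Y' = Y := by
  calc Y' = qmul B u Y' (xpow 0) := (qmul_one B u Y').symm
    _ = qmul B u Y' (qmul B u X Y) := by rw [h1]
    _ = qmul B u (qmul B u Y' X) Y := (qmul_assoc B u Y' X Y).symm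
    _ = qmul B u (xpow 0) Y := by rw [h2]
    _ = Y := one_qmul B u Y

end aux6

/-- Wall-crossing formula, symmetric case: assume the form `⟨−,−⟩` vanishes on unframed
classes (so unframed series commute). If `A, A⁻, A⁺, B` are unframed with `B(0)` a unit
(so `B` is invertible in `T̂⁰`) and `M_e(A) = B ∘ M_e(A⁻)`, `M_e(A) = M_e(A⁺) ∘ B`, then
`A⁺ = C ∘ A⁻` with `C = S_ν(B) ∘ (S_{−ν}(B))^{−1}`, and moreover
`C = S_{−ν}(S_{2ν}(B) ∘ B^{−1})`, where `ν = ⟨−, e⟩`. -/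
theorem stmt_18 {R : Type*} [CommRing R] (n : ℕ) (hn : 1 ≤ n)
    (B : (Fin (n + 1) → ℤ) →+ (Fin (n + 1) → ℤ) →+ ℤ)
    (hskew : ∀ a b : Fin (n + 1) → ℤ, B a b = - B b a)
    (hsym : ∀ a b : Fin (n + 1) → ℤ,
      a (Fin.last n) = 0 → b (Fin.last n) = 0 → B a b = 0)
    (u : Rˣ)
    (A Am Ap Bs : (Fin (n + 1) → ℕ) → R)
    (hA : Unframed A) (hAm : Unframed Am) (hAp : Unframed Ap) (hBs : Unframed Bs)
    (hB0 : IsUnit (Bs 0))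
    (h1 : Mshift (lastE n) A = qmul B u Bs (Mshift (lastE n) Am))
    (h2 : Mshift (lastE n) A = qmul B u (Mshift (lastE n) Ap) Bs) :
    (∃ D : (Fin (n + 1) → ℕ) → R, Unframed D ∧
      qmul B u Bs D = xpow 0 ∧ qmul B u D Bs = xpow 0) ∧
    (∀ D D' : (Fin (n + 1) → ℕ) → R,
      qmul B u (Sop u (-(B.flip (coeZ (lastE n)))) Bs) D = xpow 0 →
      qmul B u D (Sop u (-(B.flip (coeZ (lastE n)))) Bs) = xpow 0 →
      qmul B u Bs D' = xpow 0 →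
      qmul B u D' Bs = xpow 0 →
      Ap = qmul B u (qmul B u (Sop u (B.flip (coeZ (lastE n))) Bs) D) Am ∧
      qmul B u (Sop u (B.flip (coeZ (lastE n))) Bs) D =
        Sop u (-(B.flip (coeZ (lastE n))))
          (qmul B u (Sop u ((2 : ℤ) • (B.flip (coeZ (lastE n)))) Bs) D')) := by
  obtain ⟨b, hb⟩ := hB0
  constructor
  · exact ⟨qinv Bs b, qinv_unframed hBs, qmul_qinv B u hsym hBs hb.symm,
      qinv_qmul B u hsym hBs hb.symm⟩
  · intro D D' hD1 hD2 hD'1 hD'2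
    set ν := B.flip (coeZ (lastE n)) with hν
    -- step 1
    have h1' := h1
    rw [Mshift_eq_right B u (lastE n) A, Mshift_eq_right B u (lastE n) Am,
      ← qmul_assoc] at h1'
    have e1 := qmul_cancel_right B u (lastE n) h1'
    have e1' := congrArg (Sop u ν) e1
    rw [Sop_Sop, Sop_qmul, Sop_Sop, add_neg_cancel, Sop_zero, Sop_zero] at e1'
    -- e1' : A = qmul B u (Sop u ν Bs) Am
    -- step 2
    have h2' := h2
    rw [Mshift_eq_left B u hskew (lastE n) A, Mshift_eq_left B u hskew (lastE n) Ap,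
      qmul_assoc] at h2'
    have e2 := qmul_cancel_left B u (lastE n) h2'
    have e2' := congrArg (Sop u (-ν)) e2
    rw [Sop_Sop, Sop_qmul, Sop_Sop, neg_add_cancel, Sop_zero, Sop_zero] at e2'
    -- e2' : A = qmul B u Ap (Sop u (-ν) Bs)
    have key : qmul B u Ap (Sop u (-ν) Bs) = qmul B u (Sop u ν Bs) Am :=
      e2'.symm.trans e1'
    -- D is unframed
    have hSB : Unframed (Sop u (-ν) Bs) := unframed_Sop u _ hBs
    have hSB0 : (Sop u (-ν) Bs) 0 = (b : R) := by
      simp [Sop, coeZ_zero, ← hb]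
    have hE1 : qmul B u (Sop u (-ν) Bs) (qinv (Sop u (-ν) Bs) b) = xpow 0 :=
      qmul_qinv B u hsym hSB hSB0
    have hDE : D = qinv (Sop u (-ν) Bs) b := qmul_inv_unique B u hE1 hD2
    have hDunf : Unframed D := by rw [hDE]; exact qinv_unframed hSB
    constructor
    · have a1 : Ap = qmul B u (qmul B u Ap (Sop u (-ν) Bs)) D := by
        rw [qmul_assoc, hD1, qmul_one]
      rw [key, qmul_assoc, qmul_comm_unframed B u hsym hAm hDunf, ← qmul_assoc] at a1
      exact a1
    · have b1 : qmul B u (Sop u (-ν) Bs) (Sop u (-ν) D') = xpow 0 := by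
        rw [← Sop_qmul, hD'1, Sop_xpow_zero]
      have hD_eq : D = Sop u (-ν) D' := qmul_inv_unique B u b1 hD2
      have hsmul : -ν + (2 : ℤ) • ν = ν := by
        apply AddMonoidHom.ext
        intro a
        simp only [AddMonoidHom.add_apply, AddMonoidHom.neg_apply, AddMonoidHom.smul_apply,
          smul_eq_mul]
        ring
      rw [Sop_qmul, Sop_Sop, hsmul, ← hD_eq]
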